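/- In a directed graph with nodes {s, b_1,…,b_m, u_1, v_1, …, u_n, v_n, t}, unit-capacity arcs (s,b_i), (b_i,t), (v_j,t), (b_i,u_j) for allowed first demands, (v_j,u_k) for allowed consecutive demands, and (u_j,v_j) with cost −w_j, supply m at s and −m at t: integral feasible flows of value m are in bijection with assignments of the m resources to vertex-disjoint ordered chains of demands (respecting the allowed-successor relation), and the flow of minimum cost corresponds to the assignment maximizing ∑ w_j over served demands j. -/

import Mathlib

open Finset

section OneROneD

variable (m n : ℕ) (w : Fin n → ℝ)
  (Bm : Fin m → Fin n → Prop) (Am : Fin n → Fin n → Prop)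

/-- An integral feasible flow of value `m` in the min-cost-flow network for
`1R1D`: nodes `s, b_1,…,b_m, u_1,v_1,…,u_n,v_n, t`, unit-capacity arcs
`(s,b_i)`, `(b_i,t)`, `(v_j,t)`, `(b_i,u_j)` (allowed first demands),
`(v_j,u_k)` (allowed consecutive demands) and `(u_j,v_j)` (cost `-w_j`),
with supply `m` at `s` and `-m` at `t`. -/
structure Flow1R1D where
  fsb : Fin m → ℕ
  fbt : Fin m → ℕ
  fbu : Fin m → Fin n → ℕ
  fvu : Fin n → Fin n → ℕ
  fuv : Fin n → ℕ
  fvt : Fin n → ℕ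
  cap_sb : ∀ i, fsb i ≤ 1
  cap_bt : ∀ i, fbt i ≤ 1
  cap_bu : ∀ i j, fbu i j ≤ 1
  cap_vu : ∀ j k, fvu j k ≤ 1
  cap_uv : ∀ j, fuv j ≤ 1
  cap_vt : ∀ j, fvt j ≤ 1
  supp_bu : ∀ i j, ¬ Bm i j → fbu i j = 0
  supp_vu : ∀ j k, ¬ Am j k → fvu j k = 0
  value : ∀ i, fsb i = 1
  cons_b : ∀ i, fsb i = fbt i + ∑ j, fbu i j
  cons_u : ∀ j, (∑ i, fbu i j) + (∑ k, fvu k j) = fuv j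
  cons_v : ∀ j, fuv j = fvt j + ∑ k, fvu j k

/-- The cost of a flow: `-w_j` on each unit of flow through `(u_j,v_j)`. -/
noncomputable def flowCost (f : Flow1R1D m n Bm Am) : ℝ :=
  - ∑ j, (f.fuv j : ℝ) * w j

/-- An assignment of the `m` resources to vertex-disjoint ordered chains of
demands respecting the allowed-first relation `B` and the allowed-successor
relation `A`. -/
structure ChainAssign where
  g : Fin m → List (Fin n)
  first : ∀ i, ∀ j ∈ (g i).head?, Bm i j
  chain : ∀ i, (g i).Chain' Am
  nodup : ∀ i, (g i).Nodup
  disj : ∀ i i' : Fin m, ∀ j : Fin n, j ∈ g i → j ∈ g i' → i = i'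

/-- The total reward of an assignment: sum of rewards of served demands. -/
noncomputable def assignReward (a : ChainAssign m n Bm Am) : ℝ :=
  ∑ i, ((a.g i).map w).sum


namespace MCFAux
open List

variable {α : Type*}

lemma prefix_pair {l : List α} {x j k : α} (h : [j,k] <+: x :: l) : x = j ∧ ∃ t, l = k :: t := by
  obtain ⟨t, ht⟩ := h
  simp only [List.cons_append, List.nil_append, List.cons.injEq] at ht
  exact ⟨ht.1.symm, t, ht.2.symm⟩

lemma mem_right_of_infix_pair {l : List α} {k j : α} (h : [k,j] <:+: l) : j ∈ l :=
  h.subset (by simp)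

lemma mem_left_of_infix_pair {l : List α} {k j : α} (h : [k,j] <:+: l) : k ∈ l :=
  h.subset (by simp)

lemma pred_unique : ∀ {l : List α}, l.Nodup → ∀ {k k' j : α}, [k,j] <:+: l → [k',j] <:+: l → k = k' := by
  intro l
  induction l with
  | nil => exact fun _ {k k' j} h _ => absurd (mem_right_of_infix_pair h) List.not_mem_nil
  | cons x xs ih =>
    intro hnd k k' j h h'
    rw [List.infix_cons_iff] at h h'
    have hx : x ∉ xs := (List.nodup_cons.mp hnd).1
    have hnd' : xs.Nodup := (List.nodup_cons.mp hnd).2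
    have key : ∀ {a : α}, [a,j] <+: x :: xs → ∀ {b : α}, [b,j] <:+: xs → False := by
      intro a ha b hb
      obtain ⟨rfl, t, rfl⟩ := prefix_pair ha
      have hj : j ∉ t := (List.nodup_cons.mp hnd').1
      rw [List.infix_cons_iff] at hb
      rcases hb with hb | hb
      · obtain ⟨rfl, t', rfl⟩ := prefix_pair hb
        exact hj (List.mem_cons_self)
      · exact hj (mem_right_of_infix_pair hb)
    rcases h with h | h
    · rcases h' with h' | h'
      · rw [(prefix_pair h).1.symm, (prefix_pair h').1.symm]
      · exact absurd (key h h') id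
    · rcases h' with h' | h'
      · exact absurd (key h' h) id
      · exact ih hnd' h h'

lemma succ_unique : ∀ {l : List α}, l.Nodup → ∀ {j k k' : α}, [j,k] <:+: l → [j,k'] <:+: l → k = k' := by
  intro l
  induction l with
  | nil => exact fun _ {j k k'} h _ => absurd (mem_left_of_infix_pair h) List.not_mem_nil
  | cons x xs ih =>
    intro hnd j k k' h h'
    rw [List.infix_cons_iff] at h h'
    have hx : x ∉ xs := (List.nodup_cons.mp hnd).1
    have hnd' : xs.Nodup := (List.nodup_cons.mp hnd).2
    rcases h with h | h
    · rcases h' with h' | h'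
      · obtain ⟨rfl, t, ht⟩ := prefix_pair h
        obtain ⟨-, t', ht'⟩ := prefix_pair h'
        rw [ht] at ht'
        injection ht' with h1 h2
      · obtain ⟨rfl, t, rfl⟩ := prefix_pair h
        exact absurd (mem_left_of_infix_pair h') hx
    · rcases h' with h' | h'
      · obtain ⟨rfl, t, rfl⟩ := prefix_pair h'
        exact absurd (mem_left_of_infix_pair h) hx
      · exact ih hnd' h h'

lemma head_no_pred {l : List α} (hnd : l.Nodup) {j k : α} (hh : l.head? = some j)
    (h : [k,j] <:+: l) : False := by
  cases l with
  | nil => simp at hh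
  | cons x xs =>
    have hx : x ∉ xs := (List.nodup_cons.mp hnd).1
    rw [List.head?_cons, Option.some_inj] at hh
    subst hh
    rw [List.infix_cons_iff] at h
    rcases h with h | h
    · obtain ⟨rfl, t, rfl⟩ := prefix_pair h
      exact hx (List.mem_cons_self)
    · exact hx (mem_right_of_infix_pair h)

lemma last_no_succ : ∀ {l : List α}, l.Nodup → ∀ {j k : α}, l.getLast? = some j →
    [j,k] <:+: l → False := by
  intro l
  induction l with
  | nil => intro _ j k h; simp at h
  | cons x xs ih =>
    intro hnd j k hl h
    have hx : x ∉ xs := (List.nodup_cons.mp hnd).1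
    have hnd' : xs.Nodup := (List.nodup_cons.mp hnd).2
    rw [List.infix_cons_iff] at h
    rcases h with h | h
    · obtain ⟨rfl, t, rfl⟩ := prefix_pair h
      -- getLast? (x :: k :: t) = some x, but x ∉ k :: t
      have : x ∈ k :: t := by
        have h1 : (x :: k :: t).getLast? = (k :: t).getLast? := List.getLast?_cons_cons
        rw [h1] at hl
        exact List.mem_of_mem_getLast? hl
      exact hx this
    · have hxs : xs ≠ [] := by
        intro h0; rw [h0] at h; exact absurd (mem_left_of_infix_pair h) List.not_mem_nil
      have hl' : xs.getLast? = some j := by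
        obtain ⟨y, ys, rfl⟩ := List.exists_cons_of_ne_nil hxs
        rwa [List.getLast?_cons_cons] at hl
      exact ih hnd' hl' h

lemma mem_head_or_pred : ∀ {l : List α} {j : α}, j ∈ l →
    l.head? = some j ∨ ∃ k, [k,j] <:+: l := by
  intro l
  induction l with
  | nil => intro j h; exact absurd h List.not_mem_nil
  | cons x xs ih =>
    intro j h
    rcases List.mem_cons.mp h with rfl | h
    · exact Or.inl rfl
    · rcases ih h with hh | ⟨k, hk⟩
      · cases xs with
        | nil => simp at hh
        | cons y ys =>
          rw [List.head?_cons, Option.some_inj] at hh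
          subst hh
          exact Or.inr ⟨x, ⟨[], ys, rfl⟩⟩
      · exact Or.inr ⟨k, hk.trans (List.infix_cons_iff.mpr (Or.inr (List.infix_refl _)))⟩

lemma mem_last_or_succ : ∀ {l : List α} {j : α}, j ∈ l →
    l.getLast? = some j ∨ ∃ k, [j,k] <:+: l := by
  intro l
  induction l with
  | nil => intro j h; exact absurd h List.not_mem_nil
  | cons x xs ih =>
    intro j h
    rcases List.mem_cons.mp h with rfl | h
    · cases xs with
      | nil => exact Or.inl rfl
      | cons y ys => exact Or.inr ⟨y, ⟨[], ys, rfl⟩⟩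
    · have hxs : xs ≠ [] := List.ne_nil_of_mem h
      rcases ih h with hh | ⟨k, hk⟩
      · left
        obtain ⟨y, ys, rfl⟩ := List.exists_cons_of_ne_nil hxs
        rwa [List.getLast?_cons_cons]
      · exact Or.inr ⟨k, hk.trans (by exact (List.infix_cons_iff.mpr (Or.inr (List.infix_refl _))))⟩


attribute [local instance] Classical.propDecidable

lemma eq_one_of_ne_zero {a : ℕ} (h : a ≤ 1) (h2 : a ≠ 0) : a = 1 := by omega

lemma unique_of_sum_le_one {N : ℕ} {g : Fin N → ℕ} (h : ∑ x, g x ≤ 1) {a b : Fin N}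
    (ha : g a = 1) (hb : g b = 1) : a = b := by
  by_contra hne
  have h2 : 2 ≤ ∑ x, g x := by
    calc 2 = ∑ x ∈ ({a,b} : Finset (Fin N)), g x := by rw [Finset.sum_pair hne, ha, hb]
    _ ≤ _ := Finset.sum_le_sum_of_subset (Finset.subset_univ _)
  omega

lemma le_sum_fin {N : ℕ} (g : Fin N → ℕ) (a : Fin N) : g a ≤ ∑ x, g x :=
  Finset.single_le_sum (fun _ _ => Nat.zero_le _) (Finset.mem_univ a)

lemma sum_eq_one_exists {N : ℕ} {g : Fin N → ℕ} (h : ∑ x, g x = 1) : ∃ x, g x = 1 := by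
  obtain ⟨x, hx⟩ := Finset.exists_ne_zero_of_sum_ne_zero (s := Finset.univ) (f := g) (by omega)
  exact ⟨x, by have := le_sum_fin g x; omega⟩

lemma sum_indicator {N : ℕ} (p : Fin N → Prop) [DecidablePred p] (hu : ∀ a b, p a → p b → a = b) :
    (∑ x, if p x then (1:ℕ) else 0) = if ∃ x, p x then 1 else 0 := by
  by_cases h : ∃ x, p x
  · obtain ⟨x, hx⟩ := h
    rw [if_pos ⟨x, hx⟩, Finset.sum_eq_single x]
    · simp [hx]
    · intro b _ hbx; rw [if_neg (fun hb => hbx (hu b x hb hx))]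
    · simp
  · simp only [if_neg h]
    refine Finset.sum_eq_zero fun x _ => ?_
    rw [if_neg (fun hx => h ⟨x, hx⟩)]

section FlowAux

variable {m n : ℕ} {Bm : Fin m → Fin n → Prop} {Am : Fin n → Fin n → Prop}

lemma wf_fwd (hAm : ∀ j : Fin n, ¬ Relation.TransGen Am j j) :
    WellFounded (Function.swap Am) := by
  haveI : IsIrrefl (Fin n) (Relation.TransGen (Function.swap Am)) :=
    ⟨fun a h => hAm a (by rwa [Relation.transGen_swap] at h)⟩
  haveI : IsTrans (Fin n) (Relation.TransGen (Function.swap Am)) :=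
    ⟨fun _ _ _ => Relation.TransGen.trans⟩
  exact Subrelation.wf (fun {x y} h => Relation.TransGen.single h)
    (Finite.wellFounded_of_trans_of_irrefl _)

lemma wf_bwd (hAm : ∀ j : Fin n, ¬ Relation.TransGen Am j j) : WellFounded Am := by
  haveI : IsIrrefl (Fin n) (Relation.TransGen Am) := ⟨hAm⟩
  haveI : IsTrans (Fin n) (Relation.TransGen Am) := ⟨fun _ _ _ => Relation.TransGen.trans⟩
  exact Subrelation.wf (fun {x y} h => Relation.TransGen.single h)
    (Finite.wellFounded_of_trans_of_irrefl _)

variable {hAm : ∀ j : Fin n, ¬ Relation.TransGen Am j j}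

-- basic flow facts
lemma fbu_sum_le_one (f : Flow1R1D m n Bm Am) (i : Fin m) : ∑ j, f.fbu i j ≤ 1 := by
  have h := f.cons_b i; rw [f.value i] at h; omega

lemma fvuOut_sum_le_one (f : Flow1R1D m n Bm Am) (j : Fin n) : ∑ k, f.fvu j k ≤ 1 := by
  have h := f.cons_v j; have := f.cap_uv j; omega

lemma fbuIn_sum_le_one (f : Flow1R1D m n Bm Am) (j : Fin n) : ∑ i, f.fbu i j ≤ 1 := by
  have h := f.cons_u j; have := f.cap_uv j; omega

lemma fvuIn_sum_le_one (f : Flow1R1D m n Bm Am) (j : Fin n) : ∑ k, f.fvu k j ≤ 1 := by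
  have h := f.cons_u j; have := f.cap_uv j; omega

lemma fuv_eq_one_of_fbu (f : Flow1R1D m n Bm Am) {i : Fin m} {j : Fin n}
    (h : f.fbu i j = 1) : f.fuv j = 1 := by
  have h1 := f.cons_u j; have h2 := f.cap_uv j
  have h3 := le_sum_fin (fun i => f.fbu i j) i
  omega

lemma fuv_eq_one_of_fvuIn (f : Flow1R1D m n Bm Am) {k j : Fin n}
    (h : f.fvu k j = 1) : f.fuv j = 1 := by
  have h1 := f.cons_u j; have h2 := f.cap_uv j
  have h3 := le_sum_fin (fun k => f.fvu k j) k
  omega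

lemma fuv_eq_one_of_fvuOut (f : Flow1R1D m n Bm Am) {j k : Fin n}
    (h : f.fvu j k = 1) : f.fuv j = 1 := by
  have h1 := f.cons_v j; have h2 := f.cap_uv j
  have h3 := le_sum_fin (fun k => f.fvu j k) k
  omega

lemma not_fbu_fvu (f : Flow1R1D m n Bm Am) {i : Fin m} {k j : Fin n}
    (h : f.fbu i j = 1) (h' : f.fvu k j = 1) : False := by
  have h1 := f.cons_u j; have h2 := f.cap_uv j
  have h3 := le_sum_fin (fun i => f.fbu i j) i
  have h4 := le_sum_fin (fun k => f.fvu k j) k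
  omega

lemma Am_of_fvu (f : Flow1R1D m n Bm Am) {j k : Fin n} (h : f.fvu j k = 1) : Am j k := by
  by_contra hA
  rw [f.supp_vu _ _ hA] at h
  omega

lemma fvt_le_one' (f : Flow1R1D m n Bm Am) (j : Fin n) : f.fvt j + ∑ k, f.fvu j k ≤ 1 := by
  have h := f.cons_v j; have := f.cap_uv j; omega

noncomputable def chainFrom (f : Flow1R1D m n Bm Am)
    (hAm : ∀ j : Fin n, ¬ Relation.TransGen Am j j) : Fin n → List (Fin n) :=
  (wf_fwd hAm).fix fun j ih =>
    j :: (if h : ∃ k, f.fvu j k = 1 then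
      ih h.choose (show Am j h.choose from Am_of_fvu f h.choose_spec) else [])

lemma chainFrom_eq (f : Flow1R1D m n Bm Am) (j : Fin n) :
    chainFrom f hAm j
      = j :: (if h : ∃ k, f.fvu j k = 1 then chainFrom f hAm h.choose else []) := by
  unfold chainFrom
  rw [WellFounded.fix_eq]

lemma chainFrom_ne_nil (f : Flow1R1D m n Bm Am) (j : Fin n) : chainFrom f hAm j ≠ [] := by
  rw [chainFrom_eq]; simp

lemma chainFrom_head (f : Flow1R1D m n Bm Am) (j : Fin n) :
    (chainFrom f hAm j).head? = some j := by
  rw [chainFrom_eq]; rfl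

lemma mem_chainFrom_self (f : Flow1R1D m n Bm Am) (j : Fin n) : j ∈ chainFrom f hAm j := by
  rw [chainFrom_eq]; exact List.mem_cons_self

lemma chainFrom_eq_cons (f : Flow1R1D m n Bm Am) {j k : Fin n} (hk : f.fvu j k = 1) :
    chainFrom f hAm j = j :: chainFrom f hAm k := by
  rw [chainFrom_eq]
  have h : ∃ k, f.fvu j k = 1 := ⟨k, hk⟩
  rw [dif_pos h, unique_of_sum_le_one (fvuOut_sum_le_one f j) h.choose_spec hk]

lemma chainFrom_eq_single (f : Flow1R1D m n Bm Am) {j : Fin n}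
    (hk : ¬ ∃ k, f.fvu j k = 1) : chainFrom f hAm j = [j] := by
  rw [chainFrom_eq, dif_neg hk]

lemma chainFrom_mem_cases (f : Flow1R1D m n Bm Am) :
    ∀ j : Fin n, ∀ x ∈ chainFrom f hAm j,
      x = j ∨ ∃ k, f.fvu k x = 1 ∧ k ∈ chainFrom f hAm j := by
  intro j0
  refine (wf_fwd hAm).induction (C := fun j => ∀ x ∈ chainFrom f hAm j,
    x = j ∨ ∃ k, f.fvu k x = 1 ∧ k ∈ chainFrom f hAm j) j0 ?_
  intro j ih x hx
  rw [chainFrom_eq] at hx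
  rcases List.mem_cons.mp hx with rfl | hx
  · exact Or.inl rfl
  · by_cases h : ∃ k, f.fvu j k = 1
    · rw [dif_pos h] at hx
      rcases ih h.choose (Am_of_fvu f h.choose_spec) x hx with rfl | ⟨k, hk, hmem⟩
      · exact Or.inr ⟨j, h.choose_spec, mem_chainFrom_self f j⟩
      · refine Or.inr ⟨k, hk, ?_⟩
        rw [chainFrom_eq, dif_pos h]
        exact List.mem_cons_of_mem _ hmem
    · rw [dif_neg h] at hx
      exact absurd hx List.not_mem_nil


lemma chainFrom_reaches (f : Flow1R1D m n Bm Am) :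
    ∀ j : Fin n, ∀ x ∈ chainFrom f hAm j, x = j ∨ Relation.TransGen Am j x := by
  intro j0
  refine (wf_fwd hAm).induction (C := fun j => ∀ x ∈ chainFrom f hAm j,
    x = j ∨ Relation.TransGen Am j x) j0 ?_
  intro j ih x hx
  rw [chainFrom_eq] at hx
  rcases List.mem_cons.mp hx with rfl | hx
  · exact Or.inl rfl
  · by_cases h : ∃ k, f.fvu j k = 1
    · rw [dif_pos h] at hx
      have hA : Am j h.choose := Am_of_fvu f h.choose_spec
      rcases ih h.choose hA x hx with rfl | ht
      · exact Or.inr (Relation.TransGen.single hA)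
      · exact Or.inr (Relation.TransGen.head hA ht)
    · rw [dif_neg h] at hx
      exact absurd hx List.not_mem_nil

lemma chainFrom_nodup (f : Flow1R1D m n Bm Am) :
    ∀ j : Fin n, (chainFrom f hAm j).Nodup := by
  intro j0
  refine (wf_fwd hAm).induction (C := fun j => (chainFrom f hAm j).Nodup) j0 ?_
  intro j ih
  rw [chainFrom_eq]
  by_cases h : ∃ k, f.fvu j k = 1
  · rw [dif_pos h]
    have hA : Am j h.choose := Am_of_fvu f h.choose_spec
    refine List.nodup_cons.mpr ⟨?_, ih h.choose hA⟩
    intro hmem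
    rcases chainFrom_reaches f h.choose j hmem with heq | ht
    · rw [← heq] at hA
      exact hAm j (Relation.TransGen.single hA)
    · exact hAm j (Relation.TransGen.head hA ht)
  · rw [dif_neg h]; simp

lemma chainFrom_chain' (f : Flow1R1D m n Bm Am) :
    ∀ j : Fin n, (chainFrom f hAm j).Chain' (fun x y => f.fvu x y = 1) := by
  intro j0
  refine (wf_fwd hAm).induction
    (C := fun j => (chainFrom f hAm j).Chain' (fun x y => f.fvu x y = 1)) j0 ?_
  intro j ih
  rw [chainFrom_eq]
  by_cases h : ∃ k, f.fvu j k = 1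
  · rw [dif_pos h]
    refine List.isChain_cons.mpr ⟨?_, ih h.choose (Am_of_fvu f h.choose_spec)⟩
    intro y hy
    rw [chainFrom_head f h.choose, Option.mem_def, Option.some_inj] at hy
    rw [← hy]
    exact h.choose_spec
  · rw [dif_neg h]; exact List.isChain_singleton _

lemma chainFrom_suffix (f : Flow1R1D m n Bm Am) :
    ∀ j : Fin n, ∀ x ∈ chainFrom f hAm j, chainFrom f hAm x <:+ chainFrom f hAm j := by
  intro j0
  refine (wf_fwd hAm).induction (C := fun j => ∀ x ∈ chainFrom f hAm j,
    chainFrom f hAm x <:+ chainFrom f hAm j) j0 ?_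
  intro j ih x hx
  rw [chainFrom_eq] at hx
  rcases List.mem_cons.mp hx with rfl | hx
  · exact List.suffix_refl _
  · by_cases h : ∃ k, f.fvu j k = 1
    · rw [dif_pos h] at hx
      have := ih h.choose (Am_of_fvu f h.choose_spec) x hx
      refine this.trans ?_
      rw [chainFrom_eq f j, dif_pos h]
      exact List.suffix_cons _ _
    · rw [dif_neg h] at hx
      exact absurd hx List.not_mem_nil

lemma chainFrom_last (f : Flow1R1D m n Bm Am) :
    ∀ j x, (chainFrom f hAm j).getLast? = some x → ¬ ∃ k, f.fvu x k = 1 := by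
  intro j0
  refine (wf_fwd hAm).induction (C := fun j => ∀ x,
    (chainFrom f hAm j).getLast? = some x → ¬ ∃ k, f.fvu x k = 1) j0 ?_
  intro j ih x hl
  by_cases h : ∃ k, f.fvu j k = 1
  · rw [chainFrom_eq f j, dif_pos h] at hl
    have hne := chainFrom_ne_nil (hAm := hAm) f h.choose
    obtain ⟨y, ys, hys⟩ := List.exists_cons_of_ne_nil hne
    rw [hys, List.getLast?_cons_cons, ← hys] at hl
    exact ih h.choose (Am_of_fvu f h.choose_spec) x hl
  · rw [chainFrom_eq_single f h] at hl
    simp only [List.getLast?_singleton, Option.some_inj] at hl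
    rw [← hl]
    exact h

noncomputable def flowChains (f : Flow1R1D m n Bm Am)
    (hAm : ∀ j : Fin n, ¬ Relation.TransGen Am j j) : Fin m → List (Fin n) :=
  fun i => if h : ∃ j, f.fbu i j = 1 then chainFrom f hAm h.choose else []

lemma mem_flowChains_cases (f : Flow1R1D m n Bm Am) {i : Fin m} {j : Fin n}
    (hj : j ∈ flowChains f hAm i) :
    f.fbu i j = 1 ∨ ∃ k, f.fvu k j = 1 ∧ k ∈ flowChains f hAm i := by
  unfold flowChains at hj ⊢
  by_cases h : ∃ a, f.fbu i a = 1
  · rw [dif_pos h] at hj ⊢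
    rcases chainFrom_mem_cases f h.choose j hj with rfl | ⟨k, hk, hmem⟩
    · exact Or.inl h.choose_spec
    · exact Or.inr ⟨k, hk, hmem⟩
  · rw [dif_neg h] at hj
    exact absurd hj List.not_mem_nil

lemma flowChains_disj (f : Flow1R1D m n Bm Am) :
    ∀ j : Fin n, ∀ i i' : Fin m, j ∈ flowChains f hAm i → j ∈ flowChains f hAm i' → i = i' := by
  intro j0
  refine (wf_bwd hAm).induction (C := fun j => ∀ i i' : Fin m,
    j ∈ flowChains f hAm i → j ∈ flowChains f hAm i' → i = i') j0 ?_
  intro j ih i i' hj hj'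
  rcases mem_flowChains_cases f hj with hb | ⟨k, hk, hkm⟩
  · rcases mem_flowChains_cases f hj' with hb' | ⟨k', hk', _⟩
    · exact unique_of_sum_le_one (fbuIn_sum_le_one f j) hb hb'
    · exact absurd (not_fbu_fvu f hb hk') id
  · rcases mem_flowChains_cases f hj' with hb' | ⟨k', hk', hkm'⟩
    · exact absurd (not_fbu_fvu f hb' hk) id
    · have hkk : k = k' := unique_of_sum_le_one (fvuIn_sum_le_one f j) hk hk'
      subst hkk
      exact ih k (Am_of_fvu f hk) i i' hkm hkm'

noncomputable def toChain (f : Flow1R1D m n Bm Am)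
    (hAm : ∀ j : Fin n, ¬ Relation.TransGen Am j j) : ChainAssign m n Bm Am where
  g := flowChains f hAm
  first := by
    intro i j hj
    unfold flowChains at hj
    by_cases h : ∃ a, f.fbu i a = 1
    · rw [dif_pos h, chainFrom_head f h.choose] at hj
      rw [Option.mem_def, Option.some_inj] at hj
      by_contra hB
      have h1 := f.supp_bu i j hB
      have h2 := h.choose_spec
      rw [hj] at h2
      omega
    · rw [dif_neg h] at hj
      simp at hj
  chain := by
    intro i
    unfold flowChains
    by_cases h : ∃ a, f.fbu i a = 1
    · rw [dif_pos h]
      exact (chainFrom_chain' f h.choose).imp fun _ _ hxy => Am_of_fvu f hxy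
    · rw [dif_neg h]; exact List.isChain_nil
  nodup := by
    intro i
    unfold flowChains
    by_cases h : ∃ a, f.fbu i a = 1
    · rw [dif_pos h]; exact chainFrom_nodup f h.choose
    · rw [dif_neg h]; simp
  disj := fun i i' j hj hj' => flowChains_disj f j i i' hj hj'

noncomputable def toFlow (a : ChainAssign m n Bm Am) : Flow1R1D m n Bm Am where
  fsb _ := 1
  fbt i := if a.g i = [] then 1 else 0
  fbu i j := if (a.g i).head? = some j then 1 else 0
  fvu j k := if ∃ i, [j,k] <:+: a.g i then 1 else 0
  fuv j := if ∃ i, j ∈ a.g i then 1 else 0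
  fvt j := if ∃ i, (a.g i).getLast? = some j then 1 else 0
  cap_sb _ := le_refl 1
  cap_bt i := by split <;> omega
  cap_bu i j := by split <;> omega
  cap_vu j k := by split <;> omega
  cap_uv j := by split <;> omega
  cap_vt j := by split <;> omega
  supp_bu := by
    intro i j hB
    rw [if_neg]
    intro h
    exact hB (a.first i j h)
  supp_vu := by
    intro j k hA
    rw [if_neg]
    rintro ⟨i, hi⟩
    have hc : List.Chain' Am [j, k] := (a.chain i).infix hi
    exact hA (List.isChain_cons_cons.mp hc).1
  value _ := rfl
  cons_b := by
    intro i
    cases h : a.g i with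
    | nil => simp [h]
    | cons x xs =>
      rw [if_neg (by simp [h])]
      rw [sum_indicator (fun j => (x :: xs).head? = some j)
        (fun b c hb hc => by rw [hb] at hc; exact Option.some_inj.mp hc)]
      rw [if_pos ⟨x, rfl⟩]
      try omega
  cons_u := by
    intro j
    rw [sum_indicator (fun i => (a.g i).head? = some j) (fun b c hb hc =>
      a.disj b c j (List.mem_of_mem_head? hb) (List.mem_of_mem_head? hc))]
    rw [sum_indicator (fun k => ∃ i, [k,j] <:+: a.g i) ?huniq]
    case huniq =>
      rintro b c ⟨i1, hb⟩ ⟨i2, hc⟩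
      have hi : i2 = i1 := a.disj i2 i1 j (mem_right_of_infix_pair hc) (mem_right_of_infix_pair hb)
      rw [hi] at hc
      exact pred_unique (a.nodup i1) hb hc
    by_cases hP : ∃ i, j ∈ a.g i
    · obtain ⟨i0, hi0⟩ := hP
      rcases mem_head_or_pred hi0 with hh | ⟨k, hk⟩
      · have e1 : ∃ i, (a.g i).head? = some j := ⟨i0, hh⟩
        have e2 : ∃ i, j ∈ a.g i := ⟨i0, hi0⟩
        rw [if_pos e1, if_pos e2, if_neg]
        rintro ⟨k, i1, hk⟩
        have hi : i1 = i0 := a.disj i1 i0 j (mem_right_of_infix_pair hk) hi0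
        rw [hi] at hk
        exact head_no_pred (a.nodup i0) hh hk
      · have e1 : ∃ k', ∃ i, [k', j] <:+: a.g i := ⟨k, i0, hk⟩
        have e2 : ∃ i, j ∈ a.g i := ⟨i0, hi0⟩
        rw [if_pos e1, if_pos e2, if_neg]
        · rintro ⟨i1, hh⟩
          have hi : i1 = i0 := a.disj i1 i0 j (List.mem_of_mem_head? hh) hi0
          rw [hi] at hh
          exact head_no_pred (a.nodup i0) hh hk
    · rw [if_neg hP, if_neg, if_neg]
      · rintro ⟨k, i1, hk⟩
        exact hP ⟨i1, mem_right_of_infix_pair hk⟩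
      · rintro ⟨i1, hh⟩
        exact hP ⟨i1, List.mem_of_mem_head? hh⟩
  cons_v := by
    intro j
    rw [sum_indicator (fun k => ∃ i, [j,k] <:+: a.g i) ?huniq]
    case huniq =>
      rintro b c ⟨i1, hb⟩ ⟨i2, hc⟩
      have hi : i2 = i1 := a.disj i2 i1 j (mem_left_of_infix_pair hc) (mem_left_of_infix_pair hb)
      rw [hi] at hc
      exact succ_unique (a.nodup i1) hb hc
    by_cases hP : ∃ i, j ∈ a.g i
    · obtain ⟨i0, hi0⟩ := hP
      rcases mem_last_or_succ hi0 with hh | ⟨k, hk⟩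
      · have e1 : ∃ i, j ∈ a.g i := ⟨i0, hi0⟩
        have e2 : ∃ i, (a.g i).getLast? = some j := ⟨i0, hh⟩
        rw [if_pos e1, if_pos e2, if_neg]
        rintro ⟨k, i1, hk⟩
        have hi : i1 = i0 := a.disj i1 i0 j (mem_left_of_infix_pair hk) hi0
        rw [hi] at hk
        exact last_no_succ (a.nodup i0) hh hk
      · have e1 : ∃ i, j ∈ a.g i := ⟨i0, hi0⟩
        have e2 : ∃ k', ∃ i, [j, k'] <:+: a.g i := ⟨k, i0, hk⟩
        rw [if_pos e1, if_pos e2, if_neg]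
        · rintro ⟨i1, hh⟩
          have hi : i1 = i0 := a.disj i1 i0 j (List.mem_of_mem_getLast? hh) hi0
          rw [hi] at hh
          exact last_no_succ (a.nodup i0) hh hk
    · rw [if_neg hP, if_neg, if_neg]
      · rintro ⟨k, i1, hk⟩
        exact hP ⟨i1, mem_left_of_infix_pair hk⟩
      · rintro ⟨i1, hh⟩
        exact hP ⟨i1, List.mem_of_mem_getLast? hh⟩

lemma flowExt {f g : Flow1R1D m n Bm Am} (h1 : f.fsb = g.fsb) (h2 : f.fbt = g.fbt)
    (h3 : f.fbu = g.fbu) (h4 : f.fvu = g.fvu) (h5 : f.fuv = g.fuv) (h6 : f.fvt = g.fvt) :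
    f = g := by
  cases f; cases g
  simp only at h1 h2 h3 h4 h5 h6
  subst h1 h2 h3 h4 h5 h6
  rfl

lemma chainExt {a b : ChainAssign m n Bm Am} (h : a.g = b.g) : a = b := by
  cases a; cases b
  simp only at h
  subst h
  rfl

lemma ite_eq_of_iff {c : Prop} [Decidable c] {x : ℕ} (hx : x ≤ 1) (h : c ↔ x = 1) :
    (if c then 1 else 0) = x := by
  split
  · exact (h.1 ‹c›).symm
  · have : ¬ x = 1 := fun hh => ‹¬c› (h.2 hh)
    omega

lemma flowChains_eq_of_fbu (f : Flow1R1D m n Bm Am) {i : Fin m} {j : Fin n}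
    (hj : f.fbu i j = 1) : flowChains f hAm i = chainFrom f hAm j := by
  unfold flowChains
  rw [dif_pos ⟨j, hj⟩]
  congr 1
  exact unique_of_sum_le_one (fbu_sum_le_one f i) (Exists.choose_spec (⟨j, hj⟩ : ∃ a, f.fbu i a = 1)) hj

lemma mem_flowChains_of_mem (f : Flow1R1D m n Bm Am) {i : Fin m} {k j : Fin n}
    (hk : k ∈ flowChains f hAm i) (hj : j ∈ chainFrom f hAm k) :
    j ∈ flowChains f hAm i := by
  unfold flowChains at hk ⊢
  by_cases h : ∃ a, f.fbu i a = 1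
  · rw [dif_pos h] at hk ⊢
    exact (chainFrom_suffix f h.choose k hk).subset hj
  · rw [dif_neg h] at hk
    exact absurd hk List.not_mem_nil

lemma head_flowChains_iff (f : Flow1R1D m n Bm Am) {i : Fin m} {j : Fin n} :
    (flowChains f hAm i).head? = some j ↔ f.fbu i j = 1 := by
  constructor
  · intro h
    unfold flowChains at h
    by_cases hh : ∃ a, f.fbu i a = 1
    · rw [dif_pos hh, chainFrom_head] at h
      rw [← Option.some_inj.mp h]
      exact hh.choose_spec
    · rw [dif_neg hh] at h
      simp at h
  · intro h
    rw [flowChains_eq_of_fbu f h]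
    exact chainFrom_head f j

lemma mem_flowChains_iff (f : Flow1R1D m n Bm Am) {j : Fin n} :
    (∃ i, j ∈ flowChains f hAm i) ↔ f.fuv j = 1 := by
  constructor
  · rintro ⟨i, hi⟩
    rcases mem_flowChains_cases f hi with hb | ⟨k, hk, -⟩
    · exact fuv_eq_one_of_fbu f hb
    · exact fuv_eq_one_of_fvuIn f hk
  · refine (wf_bwd hAm).induction (C := fun j => f.fuv j = 1 → ∃ i, j ∈ flowChains f hAm i) j ?_
    intro j ih hj
    have hu := f.cons_u j
    have hsplit : (∑ i, f.fbu i j) = 1 ∨ (∑ k, f.fvu k j) = 1 := by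
      have := fbuIn_sum_le_one f j
      have := fvuIn_sum_le_one f j
      omega
    rcases hsplit with hs | hs
    · obtain ⟨i, hi⟩ := sum_eq_one_exists hs
      refine ⟨i, ?_⟩
      rw [flowChains_eq_of_fbu f hi]
      exact mem_chainFrom_self f j
    · obtain ⟨k, hk⟩ := sum_eq_one_exists hs
      have hA : Am k j := Am_of_fvu f hk
      obtain ⟨i, hki⟩ := ih k hA (fuv_eq_one_of_fvuOut f hk)
      refine ⟨i, mem_flowChains_of_mem f hki ?_⟩
      rw [chainFrom_eq_cons f hk]
      exact List.mem_cons_of_mem _ (mem_chainFrom_self f j)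

lemma infix_flowChains_iff (f : Flow1R1D m n Bm Am) {j k : Fin n} :
    (∃ i, [j,k] <:+: flowChains f hAm i) ↔ f.fvu j k = 1 := by
  constructor
  · rintro ⟨i, hi⟩
    unfold flowChains at hi
    by_cases hh : ∃ a, f.fbu i a = 1
    · rw [dif_pos hh] at hi
      have hc : List.Chain' (fun x y => f.fvu x y = 1) [j,k] :=
        (chainFrom_chain' f hh.choose).infix hi
      exact (List.isChain_cons_cons.mp hc).1
    · rw [dif_neg hh] at hi
      exact absurd (mem_left_of_infix_pair hi) List.not_mem_nil
  · intro h
    obtain ⟨i, hi⟩ := (mem_flowChains_iff f).mpr (fuv_eq_one_of_fvuOut f h)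
    refine ⟨i, ?_⟩
    have h1 : chainFrom f hAm j <:+ flowChains f hAm i := by
      unfold flowChains at hi ⊢
      by_cases hh : ∃ a, f.fbu i a = 1
      · rw [dif_pos hh] at hi ⊢
        exact chainFrom_suffix f hh.choose j hi
      · rw [dif_neg hh] at hi
        exact absurd hi List.not_mem_nil
    refine List.IsInfix.trans ?_ h1.isInfix
    rw [chainFrom_eq_cons f h, chainFrom_eq f k]
    exact ⟨[], _, rfl⟩

lemma last_flowChains_iff (f : Flow1R1D m n Bm Am) {j : Fin n} :
    (∃ i, (flowChains f hAm i).getLast? = some j) ↔ f.fvt j = 1 := by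
  constructor
  · rintro ⟨i, hi⟩
    unfold flowChains at hi
    by_cases hh : ∃ a, f.fbu i a = 1
    · rw [dif_pos hh] at hi
      have hmem : j ∈ flowChains f hAm i := by
        unfold flowChains
        rw [dif_pos hh]
        exact List.mem_of_mem_getLast? hi
      have huv : f.fuv j = 1 := (mem_flowChains_iff f).mp ⟨i, hmem⟩
      have hlast := chainFrom_last f hh.choose j hi
      have hsum : (∑ k, f.fvu j k) = 0 := by
        refine Finset.sum_eq_zero fun k _ => ?_
        have := f.cap_vu j k
        have : f.fvu j k ≠ 1 := fun hc => hlast ⟨k, hc⟩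
        omega
      have := f.cons_v j
      omega
    · rw [dif_neg hh] at hi
      simp at hi
  · intro h
    have hvle := fvt_le_one' f j
    have huv : f.fuv j = 1 := by have := f.cons_v j; have := f.cap_uv j; omega
    have hsum : (∑ k, f.fvu j k) = 0 := by omega
    obtain ⟨i, hi⟩ := (mem_flowChains_iff f).mpr huv
    refine ⟨i, ?_⟩
    have hsingle : chainFrom f hAm j = [j] := by
      refine chainFrom_eq_single f ?_
      rintro ⟨k, hk⟩
      have h0 : f.fvu j k = 0 := by
        have := Finset.sum_eq_zero_iff.mp hsum k (Finset.mem_univ k)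
        exact this
      omega
    have h1 : chainFrom f hAm j <:+ flowChains f hAm i := by
      unfold flowChains at hi ⊢
      by_cases hh : ∃ a, f.fbu i a = 1
      · rw [dif_pos hh] at hi ⊢
        exact chainFrom_suffix f hh.choose j hi
      · rw [dif_neg hh] at hi
        exact absurd hi List.not_mem_nil
    rw [hsingle] at h1
    obtain ⟨s, hs⟩ := h1
    rw [← hs]
    rw [List.getLast?_append_of_ne_nil s (l₂ := [j]) (by simp)]
    rfl

lemma nil_flowChains_iff (f : Flow1R1D m n Bm Am) {i : Fin m} :
    flowChains f hAm i = [] ↔ f.fbt i = 1 := by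
  have hcb := f.cons_b i
  rw [f.value i] at hcb
  constructor
  · intro h
    unfold flowChains at h
    by_cases hh : ∃ a, f.fbu i a = 1
    · rw [dif_pos hh] at h
      exact absurd h (chainFrom_ne_nil f hh.choose)
    · have hsum : (∑ j, f.fbu i j) = 0 := by
        refine Finset.sum_eq_zero fun j _ => ?_
        have := f.cap_bu i j
        have : f.fbu i j ≠ 1 := fun hc => hh ⟨j, hc⟩
        omega
      omega
  · intro h
    unfold flowChains
    rw [dif_neg]
    rintro ⟨j, hj⟩
    have h3 := le_sum_fin (fun j => f.fbu i j) j
    omega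

lemma roundtripA (f : Flow1R1D m n Bm Am) : toFlow (toChain f hAm) = f := by
  refine flowExt ?_ ?_ ?_ ?_ ?_ ?_
  · funext i
    exact (f.value i).symm
  · funext i
    exact ite_eq_of_iff (f.cap_bt i) (nil_flowChains_iff f)
  · funext i j
    exact ite_eq_of_iff (f.cap_bu i j) (head_flowChains_iff f)
  · funext j k
    exact ite_eq_of_iff (f.cap_vu j k) (infix_flowChains_iff f)
  · funext j
    exact ite_eq_of_iff (f.cap_uv j) (mem_flowChains_iff f)
  · funext j
    exact ite_eq_of_iff (f.cap_vt j) (last_flowChains_iff f)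

lemma chainFrom_toFlow (a : ChainAssign m n Bm Am) :
    ∀ l : List (Fin n), ∀ i : Fin m, l ≠ [] → l <:+ a.g i → ∀ x, l.head? = some x →
      chainFrom (toFlow a) hAm x = l := by
  intro l
  induction l with
  | nil => intro i h; exact absurd rfl h
  | cons x0 xs ih =>
    intro i _ hsuf x hx
    rw [List.head?_cons, Option.some_inj] at hx
    subst hx
    have hx0mem : x0 ∈ a.g i := hsuf.subset (List.mem_cons_self)
    cases xs with
    | nil =>
      refine chainFrom_eq_single (toFlow a) ?_
      rintro ⟨k, hk⟩
      have hk' : ∃ i', [x0, k] <:+: a.g i' := by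
        by_contra hc
        have : (toFlow a).fvu x0 k = 0 := if_neg hc
        omega
      obtain ⟨i', hi'⟩ := hk'
      have : i' = i := a.disj i' i x0 (mem_left_of_infix_pair hi') hx0mem
      rw [this] at hi'
      have hlast : (a.g i).getLast? = some x0 := by
        obtain ⟨s, hs⟩ := hsuf
        rw [← hs, List.getLast?_append_of_ne_nil s (l₂ := [x0]) (by simp)]
        rfl
      exact last_no_succ (a.nodup i) hlast hi'
    | cons y ys =>
      have hinf : [x0, y] <:+: a.g i := by
        obtain ⟨s, hs⟩ := hsuf
        exact ⟨s, ys, by rw [← hs]; simp⟩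
      have hvu : (toFlow a).fvu x0 y = 1 := if_pos ⟨i, hinf⟩
      rw [chainFrom_eq_cons (toFlow a) hvu]
      rw [ih i (by simp) ((List.suffix_cons x0 (y :: ys)).trans hsuf) y rfl]

lemma roundtripB (a : ChainAssign m n Bm Am) : toChain (toFlow a) hAm = a := by
  refine chainExt ?_
  funext i
  show flowChains (toFlow a) hAm i = a.g i
  cases hgi : a.g i with
  | nil =>
    unfold flowChains
    rw [dif_neg]
    rintro ⟨j, hj⟩
    have : (a.g i).head? = some j := by
      by_contra hc
      have : (toFlow a).fbu i j = 0 := if_neg hc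
      omega
    rw [hgi] at this
    simp at this
  | cons x xs =>
    have hbu : (toFlow a).fbu i x = 1 := by
      refine if_pos ?_
      rw [hgi]; rfl
    rw [flowChains_eq_of_fbu (toFlow a) hbu]
    rw [← hgi]
    exact chainFrom_toFlow a (a.g i) i (by rw [hgi]; simp) (List.suffix_refl _) x (by rw [hgi]; rfl)

lemma sum_indicator_real {N : ℕ} (p : Fin N → Prop) [DecidablePred p]
    (hu : ∀ a b, p a → p b → a = b) (c : ℝ) :
    (∑ x, if p x then c else 0) = if ∃ x, p x then c else 0 := by
  by_cases h : ∃ x, p x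
  · obtain ⟨x, hx⟩ := h
    rw [if_pos ⟨x, hx⟩, Finset.sum_eq_single x]
    · simp [hx]
    · intro b _ hbx; rw [if_neg (fun hb => hbx (hu b x hb hx))]
    · simp
  · simp only [if_neg h]
    refine Finset.sum_eq_zero fun x _ => ?_
    rw [if_neg (fun hx => h ⟨x, hx⟩)]

lemma flowChains_nodup (f : Flow1R1D m n Bm Am) (i : Fin m) :
    (flowChains f hAm i).Nodup := (toChain f hAm).nodup i

lemma cost_eq (f : Flow1R1D m n Bm Am) (w : Fin n → ℝ) :
    (∑ j, (f.fuv j : ℝ) * w j) = ∑ i, ((flowChains f hAm i).map w).sum := by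
  have step1 : ∀ i, ((flowChains f hAm i).map w).sum
      = ∑ j ∈ (flowChains f hAm i).toFinset, w j :=
    fun i => (List.sum_toFinset w (flowChains_nodup f i)).symm
  calc ∑ j, (f.fuv j : ℝ) * w j
      = ∑ j, if ∃ i, j ∈ flowChains f hAm i then w j else 0 := by
        refine Finset.sum_congr rfl fun j _ => ?_
        by_cases h : f.fuv j = 1
        · rw [if_pos ((mem_flowChains_iff f).mpr h), h]
          simp
        · have h0 : f.fuv j = 0 := by have := f.cap_uv j; omega
          rw [if_neg (fun hc => h ((mem_flowChains_iff f).mp hc)), h0]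
          simp
    _ = ∑ j, ∑ i, if j ∈ flowChains f hAm i then w j else 0 := by
        refine Finset.sum_congr rfl fun j _ => ?_
        rw [sum_indicator_real (fun i => j ∈ flowChains f hAm i)
          (fun b c hb hc => flowChains_disj f j b c hb hc) (w j)]
    _ = ∑ i, ∑ j, if j ∈ flowChains f hAm i then w j else 0 := Finset.sum_comm
    _ = ∑ i, ((flowChains f hAm i).map w).sum := by
        refine Finset.sum_congr rfl fun i _ => ?_
        rw [step1 i]
        rw [← Finset.sum_filter]
        refine Finset.sum_congr ?_ fun j _ => rfl
        ext j
        simp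

end FlowAux
end MCFAux

/-- MCF formulation of `1R1D`: integral feasible flows of value `m` are in
bijection with assignments of the `m` resources to vertex-disjoint ordered
chains of demands, with `cost = -reward`; consequently a flow has minimum
cost iff the corresponding assignment maximizes the total reward `∑ w_j`
over served demands. -/
theorem flow_chain_bijection (hw : ∀ j, 0 < w j)
    (hAm : ∀ j : Fin n, ¬ Relation.TransGen Am j j) :
    ∃ e : Flow1R1D m n Bm Am ≃ ChainAssign m n Bm Am,
      (∀ f, flowCost m n w Bm Am f = - assignReward m n w Bm Am (e f)) ∧
      (∀ f, (∀ f', flowCost m n w Bm Am f ≤ flowCost m n w Bm Am f') ↔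
        (∀ a, assignReward m n w Bm Am a ≤ assignReward m n w Bm Am (e f))) := by
  refine ⟨{ toFun := fun f => MCFAux.toChain f hAm
            invFun := MCFAux.toFlow
            left_inv := fun f => MCFAux.roundtripA f
            right_inv := fun a => MCFAux.roundtripB a }, ?_, ?_⟩
  · intro f
    show flowCost m n w Bm Am f = - assignReward m n w Bm Am (MCFAux.toChain f hAm)
    unfold flowCost assignReward
    exact congrArg Neg.neg (MCFAux.cost_eq f w)
  · intro f
    have costEq : ∀ f' : Flow1R1D m n Bm Am,
        flowCost m n w Bm Am f' = - assignReward m n w Bm Am (MCFAux.toChain f' hAm) := by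
      intro f'
      unfold flowCost assignReward
      exact congrArg Neg.neg (MCFAux.cost_eq f' w)
    constructor
    · intro hmin a
      have h1 := hmin (MCFAux.toFlow a)
      rw [costEq f, costEq (MCFAux.toFlow a), MCFAux.roundtripB a] at h1
      show assignReward m n w Bm Am a ≤ assignReward m n w Bm Am (MCFAux.toChain f hAm)
      linarith
    · intro hmax f'
      have h1 : assignReward m n w Bm Am (MCFAux.toChain f' hAm)
          ≤ assignReward m n w Bm Am (MCFAux.toChain f hAm) := hmax (MCFAux.toChain f' hAm)
      rw [costEq f, costEq f']
      linarith

end OneROneD
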